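/- For a quasi-hyperbolic continuous linear cocycle over a compact base, the functions x ↦ dim E^s(x) and x ↦ dim E^u(x) are upper semicontinuous; moreover if a belongs to the α-limit or ω-limit set of x, then dim E^s(a) ≥ dim E^s(x) and dim E^u(a) ≥ dim E^u(x). -/

import Mathlib

open Filter Topology

/-- A continuous linear cocycle (`ℝ`-action by bundle isomorphisms on the
trivial vector bundle `B × E`) over a continuous flow on `B`. -/
structure LinearCocycle (B E : Type*) [TopologicalSpace B]
    [NormedAddCommGroup E] [NormedSpace ℝ E] where
  flow : ℝ → B → B
  flow_cont : Continuous fun p : ℝ × B => flow p.1 p.2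
  flow_zero : ∀ b, flow 0 b = b
  flow_add : ∀ s t b, flow s (flow t b) = flow (s + t) b
  P : ℝ → B → E →L[ℝ] E
  P_cont : Continuous fun p : ℝ × B => P p.1 p.2
  P_zero : ∀ b, P 0 b = ContinuousLinearMap.id ℝ E
  P_comp : ∀ s t b, (P s (flow t b)).comp (P t b) = P (s + t) b

variable {B E : Type*} [TopologicalSpace B]
  [NormedAddCommGroup E] [NormedSpace ℝ E]

/-- Quasi-hyperbolicity: every nonzero vector has unbounded orbit. -/
def LinearCocycle.IsQuasiHyperbolic (Φ : LinearCocycle B E) : Prop :=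
  ∀ b : B, ∀ v : E, v ≠ 0 → ∀ C : ℝ, ∃ t : ℝ, C < ‖Φ.P t b v‖

/-- The subspace of vectors with bounded forward orbit. -/
def LinearCocycle.stable (Φ : LinearCocycle B E) (b : B) : Submodule ℝ E where
  carrier := {v | ∃ C : ℝ, ∀ t > (0:ℝ), ‖Φ.P t b v‖ ≤ C}
  add_mem' := by
    rintro u v ⟨C₁, h₁⟩ ⟨C₂, h₂⟩
    exact ⟨C₁ + C₂, fun t ht => by
      simpa [map_add] using (norm_add_le (Φ.P t b u) (Φ.P t b v)).trans
        (add_le_add (h₁ t ht) (h₂ t ht))⟩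
  zero_mem' := ⟨0, fun t ht => by simp⟩
  smul_mem' := by
    rintro c v ⟨C, h⟩
    exact ⟨‖c‖ * C, fun t ht => by
      rw [map_smul, norm_smul]
      exact mul_le_mul_of_nonneg_left (h t ht) (norm_nonneg c)⟩

/-- The subspace of vectors with bounded backward orbit. -/
def LinearCocycle.unstable (Φ : LinearCocycle B E) (b : B) : Submodule ℝ E where
  carrier := {v | ∃ C : ℝ, ∀ t > (0:ℝ), ‖Φ.P (-t) b v‖ ≤ C}
  add_mem' := by
    rintro u v ⟨C₁, h₁⟩ ⟨C₂, h₂⟩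
    exact ⟨C₁ + C₂, fun t ht => by
      simpa [map_add] using (norm_add_le (Φ.P (-t) b u) (Φ.P (-t) b v)).trans
        (add_le_add (h₁ t ht) (h₂ t ht))⟩
  zero_mem' := ⟨0, fun t ht => by simp⟩
  smul_mem' := by
    rintro c v ⟨C, h⟩
    exact ⟨‖c‖ * C, fun t ht => by
      rw [map_smul, norm_smul]
      exact mul_le_mul_of_nonneg_left (h t ht) (norm_nonneg c)⟩

/-- Uniform hyperbolicity of a linear cocycle over an invariant subset `Λ`. -/
def LinearCocycle.IsHyperbolicOn (Φ : LinearCocycle B E) (Λ : Set B) : Prop :=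
  ∃ Es Eu : B → Submodule ℝ E,
    (∀ t : ℝ, ∀ b ∈ Λ, (Es b).map (Φ.P t b : E →ₗ[ℝ] E) = Es (Φ.flow t b)) ∧
    (∀ t : ℝ, ∀ b ∈ Λ, (Eu b).map (Φ.P t b : E →ₗ[ℝ] E) = Eu (Φ.flow t b)) ∧
    (∀ b ∈ Λ, IsCompl (Es b) (Eu b)) ∧
    ∃ T > (0:ℝ), ∀ b ∈ Λ,
      (∀ v ∈ Es b, v ≠ 0 → ‖Φ.P T b v‖ < (1/2) * ‖v‖) ∧
      (∀ v ∈ Eu b, v ≠ 0 → ‖Φ.P (-T) b v‖ < (1/2) * ‖v‖)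

/-- The `ω`-limit set of `x` under the flow of the cocycle. -/
def LinearCocycle.omegaLimit (Φ : LinearCocycle B E) (x : B) : Set B :=
  {a | MapClusterPt a atTop fun t : ℝ => Φ.flow t x}

/-- The `α`-limit set of `x` under the flow of the cocycle. -/
def LinearCocycle.alphaLimit (Φ : LinearCocycle B E) (x : B) : Set B :=
  {a | MapClusterPt a atBot fun t : ℝ => Φ.flow t x}

namespace LinearCocycle

variable {B E : Type*} [TopologicalSpace B]
  [NormedAddCommGroup E] [NormedSpace ℝ E]

/-- The time-reversed cocycle. -/
noncomputable def reverse (Φ : LinearCocycle B E) : LinearCocycle B E where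
  flow t b := Φ.flow (-t) b
  flow_cont := by
    show Continuous fun p : ℝ × B => Φ.flow (-p.1) p.2
    exact Φ.flow_cont.comp ((continuous_neg.comp continuous_fst).prodMk continuous_snd)
  flow_zero b := by simpa using Φ.flow_zero b
  flow_add s t b := by show Φ.flow (-s) (Φ.flow (-t) b) = _; rw [Φ.flow_add, ← neg_add]
  P t b := Φ.P (-t) b
  P_cont := by
    show Continuous fun p : ℝ × B => Φ.P (-p.1) p.2
    exact Φ.P_cont.comp ((continuous_neg.comp continuous_fst).prodMk continuous_snd)
  P_zero b := by simpa using Φ.P_zero b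
  P_comp s t b := by show (Φ.P (-s) (Φ.flow (-t) b)).comp _ = _; rw [Φ.P_comp, ← neg_add]

lemma reverse_isQuasiHyperbolic {Φ : LinearCocycle B E} (h : Φ.IsQuasiHyperbolic) :
    Φ.reverse.IsQuasiHyperbolic := by
  intro b v hv C
  obtain ⟨t, ht⟩ := h b v hv C
  exact ⟨-t, by simpa [reverse] using ht⟩

lemma reverse_stable (Φ : LinearCocycle B E) (b : B) :
    Φ.reverse.stable b = Φ.unstable b := by
  apply Submodule.ext
  intro v
  constructor <;> rintro ⟨C, hC⟩ <;> exact ⟨C, fun t ht => by simpa [reverse] using hC t ht⟩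

lemma reverse_flow (Φ : LinearCocycle B E) (t : ℝ) (b : B) :
    Φ.reverse.flow t b = Φ.flow (-t) b := rfl

/-- The cocycle maps stable spaces into stable spaces. -/
lemma maps_stable (Φ : LinearCocycle B E) (t : ℝ) (b : B) {v : E}
    (hv : v ∈ Φ.stable b) : Φ.P t b v ∈ Φ.stable (Φ.flow t b) := by
  obtain ⟨C, hC⟩ := hv
  -- bound for intermediate times
  have hcomp : IsCompact ((fun r : ℝ => ‖Φ.P r b v‖) '' Set.Icc t 0) :=
    (isCompact_Icc).image <| by
      have : Continuous fun r : ℝ => Φ.P r b v := by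
        have h1 : Continuous fun r : ℝ => Φ.P r b :=
          Φ.P_cont.comp (continuous_id.prodMk continuous_const)
        exact isBoundedBilinearMap_apply.continuous.comp (h1.prodMk continuous_const)
      exact continuous_norm.comp this
  obtain ⟨K, hK⟩ := hcomp.bddAbove
  refine ⟨max C K, fun s hs => ?_⟩
  have key : ∀ x : E, Φ.P s (Φ.flow t b) (Φ.P t b x) = Φ.P (s + t) b x := by
    intro x
    have := Φ.P_comp s t b
    calc Φ.P s (Φ.flow t b) (Φ.P t b x) = ((Φ.P s (Φ.flow t b)).comp (Φ.P t b)) x := rfl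
      _ = Φ.P (s + t) b x := by rw [this]
  rw [key]
  rcases lt_or_ge 0 (s + t) with h | h
  · exact le_max_of_le_left (hC _ h)
  · refine le_max_of_le_right (hK ⟨s + t, ⟨?_, h⟩, rfl⟩)
    linarith
lemma P_injective (Φ : LinearCocycle B E) (t : ℝ) (b : B) :
    Function.Injective (Φ.P t b) := by
  have h : ∀ x : E, Φ.P (-t) (Φ.flow t b) (Φ.P t b x) = x := by
    intro x
    have := Φ.P_comp (-t) t b
    calc Φ.P (-t) (Φ.flow t b) (Φ.P t b x) = ((Φ.P (-t) (Φ.flow t b)).comp (Φ.P t b)) x := rfl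
      _ = Φ.P (-t + t) b x := by rw [this]
      _ = x := by simp [Φ.P_zero]
  exact Function.LeftInverse.injective h

lemma finrank_stable_flow_le (Φ : LinearCocycle B E) [FiniteDimensional ℝ E] (t : ℝ) (b : B) :
    Module.finrank ℝ (Φ.stable b) ≤ Module.finrank ℝ (Φ.stable (Φ.flow t b)) := by
  have h : ∀ x ∈ Φ.stable b, (Φ.P t b : E →ₗ[ℝ] E) x ∈ Φ.stable (Φ.flow t b) :=
    fun x hx => Φ.maps_stable t b hx
  have hinj : Function.Injective (((Φ.P t b : E →ₗ[ℝ] E)).restrict h) := by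
    intro x y hxy
    exact Subtype.ext (Φ.P_injective t b (congrArg Subtype.val hxy))
  exact LinearMap.finrank_le_finrank_of_injective hinj

lemma finrank_stable_flow (Φ : LinearCocycle B E) [FiniteDimensional ℝ E] (t : ℝ) (b : B) :
    Module.finrank ℝ (Φ.stable (Φ.flow t b)) = Module.finrank ℝ (Φ.stable b) := by
  refine le_antisymm ?_ (Φ.finrank_stable_flow_le t b)
  have := Φ.finrank_stable_flow_le (-t) (Φ.flow t b)
  rwa [Φ.flow_add, neg_add_cancel, Φ.flow_zero] at this

end LinearCocycle

namespace LinearCocycle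

variable {B E : Type*} [TopologicalSpace B]
  [NormedAddCommGroup E] [NormedSpace ℝ E]

lemma apply_cont (Φ : LinearCocycle B E) (t : ℝ) :
    Continuous fun p : B × E => Φ.P t p.1 p.2 := by
  have h1 : Continuous fun p : B × E => Φ.P t p.1 :=
    Φ.P_cont.comp ((continuous_const).prodMk continuous_fst)
  exact isBoundedBilinearMap_apply.continuous.comp (h1.prodMk continuous_snd)

lemma P_comp_apply (Φ : LinearCocycle B E) (s t : ℝ) (b : B) (x : E) :
    Φ.P s (Φ.flow t b) (Φ.P t b x) = Φ.P (s + t) b x := by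
  calc Φ.P s (Φ.flow t b) (Φ.P t b x) = ((Φ.P s (Φ.flow t b)).comp (Φ.P t b)) x := rfl
    _ = Φ.P (s + t) b x := by rw [Φ.P_comp]

/-- Uniform boundedness of forward orbits of stable vectors. -/
lemma uniform_bound (Φ : LinearCocycle B E) [CompactSpace B] [FiniteDimensional ℝ E]
    (hqh : Φ.IsQuasiHyperbolic) :
    ∃ C : ℝ, ∀ b : B, ∀ v ∈ Φ.stable b, ∀ t : ℝ, 0 ≤ t → ‖Φ.P t b v‖ ≤ C * ‖v‖ := by
  by_contra hcon
  push_neg at hcon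
  -- for each n, a unit stable vector whose orbit exceeds n
  have hsel : ∀ n : ℕ, ∃ (b : B) (v : E), v ∈ Φ.stable b ∧ ‖v‖ = 1 ∧
      ∃ t : ℝ, 0 ≤ t ∧ (n : ℝ) < ‖Φ.P t b v‖ := by
    intro n
    obtain ⟨b, v, hv, t, ht, hbig⟩ := hcon n
    have hvne : v ≠ 0 := by
      rintro rfl
      simp at hbig
    have hvpos : (0:ℝ) < ‖v‖ := norm_pos_iff.mpr hvne
    refine ⟨b, ‖v‖⁻¹ • v, Submodule.smul_mem _ _ hv, ?_, t, ht, ?_⟩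
    · rw [norm_smul, norm_inv, norm_norm, inv_mul_cancel₀ hvpos.ne']
    · rw [map_smul, norm_smul, norm_inv, norm_norm]
      rw [lt_inv_mul_iff₀ hvpos, mul_comm]
      exact hbig
  choose b v hstab hunit t ht0 hbig using hsel
  -- sup of forward orbit
  set M : ℕ → ℝ := fun n => sSup ((fun s : ℝ => ‖Φ.P s (b n) (v n)‖) '' Set.Ici 0) with hM
  have hbdd : ∀ n, BddAbove ((fun s : ℝ => ‖Φ.P s (b n) (v n)‖) '' Set.Ici 0) := by
    intro n
    obtain ⟨C, hC⟩ := hstab n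
    refine ⟨max C 1, ?_⟩
    rintro _ ⟨s, hs, rfl⟩
    rcases eq_or_lt_of_le (Set.mem_Ici.mp hs) with h | h
    · simp [← h, Φ.P_zero, hunit n]
    · exact le_max_of_le_left (hC s h)
  have hMge : ∀ n, ∀ s : ℝ, 0 ≤ s → ‖Φ.P s (b n) (v n)‖ ≤ M n :=
    fun n s hs => le_csSup (hbdd n) ⟨s, hs, rfl⟩
  have hM1 : ∀ n, 1 ≤ M n := fun n => by
    have := hMge n 0 le_rfl
    rwa [Φ.P_zero, ContinuousLinearMap.id_apply, hunit n] at this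
  have hMn : ∀ n : ℕ, (n : ℝ) < M n := fun n => lt_of_lt_of_le (hbig n) (hMge n (t n) (ht0 n))
  -- choose time s where orbit is at least M n / 2
  have hsel2 : ∀ n : ℕ, ∃ s : ℝ, 0 ≤ s ∧ M n / 2 < ‖Φ.P s (b n) (v n)‖ := by
    intro n
    have hlt : M n / 2 < M n := by linarith [hM1 n]
    have hne : ((fun s : ℝ => ‖Φ.P s (b n) (v n)‖) '' Set.Ici 0).Nonempty :=
      ⟨_, ⟨0, Set.self_mem_Ici, rfl⟩⟩
    obtain ⟨_, ⟨s, hs, rfl⟩, h⟩ := exists_lt_of_lt_csSup hne hlt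
    exact ⟨s, hs, h⟩
  choose s hs0 hsbig using hsel2
  set N : ℕ → ℝ := fun n => ‖Φ.P (s n) (b n) (v n)‖ with hN
  have hNpos : ∀ n, 0 < N n := fun n => lt_of_le_of_lt (by linarith [hM1 n]) (hsbig n)
  set y : ℕ → B := fun n => Φ.flow (s n) (b n) with hy
  set w : ℕ → E := fun n => (N n)⁻¹ • Φ.P (s n) (b n) (v n) with hw
  have hwnorm : ∀ n, ‖w n‖ = 1 := fun n => by
    rw [hw]
    simp only [norm_smul, norm_inv, Real.norm_eq_abs, abs_of_pos (hNpos n)]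
    exact inv_mul_cancel₀ (hNpos n).ne'
  -- key bound on shifted orbit
  have hkey : ∀ n : ℕ, ∀ r : ℝ, -(s n) ≤ r → ‖Φ.P r (y n) (w n)‖ ≤ 2 := by
    intro n r hr
    have : Φ.P r (y n) (w n) = (N n)⁻¹ • Φ.P (r + s n) (b n) (v n) := by
      rw [hw, map_smul, Φ.P_comp_apply]
    rw [this, norm_smul, norm_inv, Real.norm_eq_abs, abs_of_pos (hNpos n)]
    have h1 : ‖Φ.P (r + s n) (b n) (v n)‖ ≤ M n := hMge n _ (by linarith)
    have h2 : M n ≤ 2 * N n := by linarith [hsbig n]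
    rw [inv_mul_le_iff₀ (hNpos n)]
    linarith
  -- s n → ∞
  have hsinf : ∀ S : ℝ, ∀ᶠ n in atTop, S ≤ s n := by
    intro S
    rcases le_or_gt S 0 with hS | hS
    · exact Filter.Eventually.of_forall fun n => le_trans hS (hs0 n)
    · have hcomp : IsCompact ((fun p : ℝ × B => ‖Φ.P p.1 p.2‖) '' (Set.Icc 0 S ×ˢ Set.univ)) :=
        (isCompact_Icc.prod isCompact_univ).image (continuous_norm.comp Φ.P_cont)
      obtain ⟨K, hK⟩ := hcomp.bddAbove
      obtain ⟨n₀, hn₀⟩ := exists_nat_gt (2 * K)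
      filter_upwards [Filter.eventually_ge_atTop n₀] with n hn
      by_contra hcon2
      push_neg at hcon2
      have hmem : ‖Φ.P (s n) (b n)‖ ≤ K :=
        hK ⟨(s n, b n), ⟨⟨hs0 n, hcon2.le⟩, trivial⟩, rfl⟩
      have hNK : N n ≤ K := by
        calc N n = ‖Φ.P (s n) (b n) (v n)‖ := rfl
          _ ≤ ‖Φ.P (s n) (b n)‖ * ‖v n‖ := ContinuousLinearMap.le_opNorm _ _
          _ = ‖Φ.P (s n) (b n)‖ := by rw [hunit n, mul_one]
          _ ≤ K := hmem
      have hN2 : (n : ℝ) / 2 < N n := by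
        have h1 := hsbig n
        have h2 := hMn n
        simp only [hN]
        linarith
      have hnn : (n₀ : ℝ) ≤ n := Nat.cast_le.mpr hn
      linarith
  -- extract a cluster point of (y n, w n) in B × sphere
  have hprod : IsCompact ((Set.univ : Set B) ×ˢ Metric.sphere (0 : E) 1) :=
    isCompact_univ.prod (isCompact_sphere 0 1)
  have hmemprod : ∀ n, (y n, w n) ∈ (Set.univ : Set B) ×ˢ Metric.sphere (0 : E) 1 :=
    fun n => ⟨trivial, by simp [hwnorm n]⟩
  have hle : Filter.map (fun n => (y n, w n)) atTop ≤
      Filter.principal ((Set.univ : Set B) ×ˢ Metric.sphere (0 : E) 1) := by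
    rw [Filter.le_principal_iff, Filter.mem_map]
    exact Filter.Eventually.of_forall hmemprod
  obtain ⟨⟨a, u⟩, hmem, hclus⟩ := hprod.exists_clusterPt hle
  have hune : u ≠ 0 := by
    have : ‖u‖ = 1 := by simpa using hmem.2
    intro h
    rw [h, norm_zero] at this
    norm_num at this
  -- every time bound 2
  have hbound : ∀ r : ℝ, ‖Φ.P r a u‖ ≤ 2 := by
    intro r
    have hclosed : IsClosed {p : B × E | ‖Φ.P r p.1 p.2‖ ≤ 2} :=
      isClosed_le (continuous_norm.comp (Φ.apply_cont r)) continuous_const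
    have hev : ∀ᶠ n in atTop, (y n, w n) ∈ {p : B × E | ‖Φ.P r p.1 p.2‖ ≤ 2} := by
      filter_upwards [hsinf (-r)] with n hn
      exact hkey n r (by linarith)
    have hmemf : {p : B × E | ‖Φ.P r p.1 p.2‖ ≤ 2} ∈ Filter.map (fun n => (y n, w n)) atTop := hev
    have : ClusterPt (a, u) (Filter.principal {p : B × E | ‖Φ.P r p.1 p.2‖ ≤ 2}) :=
      hclus.mono (Filter.le_principal_iff.mpr hmemf)
    exact hclosed.closure_subset (mem_closure_iff_clusterPt.mpr this)
  obtain ⟨r, hr⟩ := hqh a u hune 2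
  exact absurd (hbound r) (not_le.mpr hr)

end LinearCocycle

namespace LinearCocycle

variable {B E : Type*} [TopologicalSpace B]
  [NormedAddCommGroup E] [NormedSpace ℝ E]

/-- Key lemma: along a filter clustering at `a`, the stable dimension can only drop at `a`. -/
lemma le_finrank_stable_of_clusterPt (Φ : LinearCocycle B E)
    [CompactSpace B] [FiniteDimensional ℝ E] (hqh : Φ.IsQuasiHyperbolic)
    {ι : Type*} {l : Filter ι} {m : ι → B} {a : B} (ha : MapClusterPt a l m)
    {k : ℕ} (hk : ∀ᶠ i in l, k ≤ Module.finrank ℝ (Φ.stable (m i))) :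
    k ≤ Module.finrank ℝ (Φ.stable a) := by
  classical
  obtain ⟨C, hC⟩ := Φ.uniform_bound hqh
  -- characterization of stable spaces
  have hchar : ∀ (b : B) (v : E), v ∈ Φ.stable b ↔ ∀ r : ℝ, 0 ≤ r → ‖Φ.P r b v‖ ≤ C * ‖v‖ := by
    intro b v
    exact ⟨fun hv r hr => hC b v hv r hr, fun h => ⟨C * ‖v‖, fun r hr => h r hr.le⟩⟩
  -- a continuous linear equivalence to Euclidean space
  set F := EuclideanSpace ℝ (Fin (Module.finrank ℝ E)) with hF
  have e : E ≃L[ℝ] F := ContinuousLinearEquiv.ofFinrankEq finrank_euclideanSpace_fin.symm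
  -- choose orthonormal k-tuples in the stable spaces
  have hsel : ∀ i : ι, ∃ g : Fin k → F, k ≤ Module.finrank ℝ (Φ.stable (m i)) →
      (Orthonormal ℝ g ∧ ∀ j, e.symm (g j) ∈ Φ.stable (m i)) := by
    intro i
    by_cases h : k ≤ Module.finrank ℝ (Φ.stable (m i))
    · have hrk : Module.finrank ℝ ((Φ.stable (m i)).map ((e.toLinearEquiv : E ≃ₗ[ℝ] F) : E →ₗ[ℝ] F))
          = Module.finrank ℝ (Φ.stable (m i)) :=
        LinearEquiv.finrank_map_eq _ _
      have hk' : k ≤ Module.finrank ℝ ((Φ.stable (m i)).map ((e.toLinearEquiv : E ≃ₗ[ℝ] F) : E →ₗ[ℝ] F)) :=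
        hrk ▸ h
      set S := (Φ.stable (m i)).map ((e.toLinearEquiv : E ≃ₗ[ℝ] F) : E →ₗ[ℝ] F)
      have ob := stdOrthonormalBasis ℝ S
      refine ⟨fun j => (ob (Fin.castLE hk' j) : F), fun _ => ⟨?_, ?_⟩⟩
      · have h1 : Orthonormal ℝ (fun j : Fin k => ob (Fin.castLE hk' j)) :=
          ob.orthonormal.comp _ (Fin.castLE_injective hk')
        exact S.subtypeₗᵢ.orthonormal_comp_iff.mpr h1
      · intro j
        obtain ⟨x, hx, hxe⟩ := Submodule.mem_map.mp (ob (Fin.castLE hk' j)).2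
        have hsymm : e.symm ((ob (Fin.castLE hk' j) : F)) = x := by
          rw [← hxe]
          exact e.symm_apply_apply x
        rwa [hsymm]
    · exact ⟨0, fun h' => absurd h' h⟩
  choose g hg using hsel
  -- restrict the filter so that m tends to a
  have hne : (l ⊓ Filter.comap m (nhds a)).NeBot := by
    rw [← Filter.map_neBot_iff m, Filter.push_pull]
    rw [MapClusterPt, ClusterPt, inf_comm] at ha
    exact ha
  set l₀ := l ⊓ Filter.comap m (nhds a) with hl₀
  have hml₀ : Filter.Tendsto m l₀ (nhds a) := by
    rw [Filter.Tendsto, hl₀, Filter.push_pull]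
    exact inf_le_right
  have hkl₀ : ∀ᶠ i in l₀, Orthonormal ℝ (g i) ∧ ∀ j, e.symm (g i j) ∈ Φ.stable (m i) := by
    filter_upwards [hk.filter_mono inf_le_left] with i hi
    exact hg i hi
  -- the orthonormal tuples live in a compact set
  set K : Set (Fin k → F) := {q | Orthonormal ℝ q} with hK
  have hKclosed : IsClosed K := by
    have : K = ⋂ (i : Fin k) (j : Fin k),
        {q : Fin k → F | inner ℝ (q i) (q j) = if i = j then (1:ℝ) else 0} := by
      ext q
      simp only [hK, Set.mem_setOf_eq, Set.mem_iInter, orthonormal_iff_ite]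
    rw [this]
    refine isClosed_iInter fun i => isClosed_iInter fun j => ?_
    exact isClosed_eq (Continuous.inner (continuous_apply i) (continuous_apply j))
      continuous_const
  have hKbdd : Bornology.IsBounded K := by
    refine Metric.isBounded_iff_subset_closedBall 0 |>.mpr ⟨1, fun q hq => ?_⟩
    rw [Metric.mem_closedBall, dist_zero_right]
    rw [pi_norm_le_iff_of_nonneg zero_le_one]
    intro j
    rw [hq.1 j]
  have hKcompact : IsCompact K := Metric.isCompact_of_isClosed_isBounded hKclosed hKbdd
  -- cluster point of the tuples
  have hgK : ∀ᶠ i in l₀, g i ∈ K := by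
    filter_upwards [hkl₀] with i hi
    exact hi.1
  have hlegK : Filter.map g l₀ ≤ Filter.principal K := by
    rw [Filter.le_principal_iff, Filter.mem_map]
    exact hgK
  have : (Filter.map g l₀).NeBot := Filter.map_neBot
  obtain ⟨q, hqK, hqclus⟩ := hKcompact.exists_clusterPt hlegK
  -- restrict further so that g tends to q
  have hne1 : (l₀ ⊓ Filter.comap g (nhds q)).NeBot := by
    rw [← Filter.map_neBot_iff g, Filter.push_pull]
    rw [ClusterPt, inf_comm] at hqclus
    exact hqclus
  set l₁ := l₀ ⊓ Filter.comap g (nhds q) with hl₁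
  have hgl₁ : Filter.Tendsto g l₁ (nhds q) := by
    rw [Filter.Tendsto, hl₁, Filter.push_pull]
    exact inf_le_right
  have hml₁ : Filter.Tendsto m l₁ (nhds a) := hml₀.mono_left inf_le_left
  have hpair : Filter.Tendsto (fun i => (m i, g i)) l₁ (nhds (a, q)) :=
    hml₁.prodMk_nhds hgl₁
  -- each limit vector is in the stable space of a
  have hmema : ∀ j : Fin k, e.symm (q j) ∈ Φ.stable a := by
    intro j
    rw [hchar]
    intro r hr
    have hclosed : IsClosed {p : B × (Fin k → F) |
        ‖Φ.P r p.1 (e.symm (p.2 j))‖ ≤ C * ‖e.symm (p.2 j)‖} := by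
      have hc1 : Continuous fun p : B × (Fin k → F) => e.symm (p.2 j) :=
        e.symm.continuous.comp ((continuous_apply j).comp continuous_snd)
      have hc2 : Continuous fun p : B × (Fin k → F) => ‖Φ.P r p.1 (e.symm (p.2 j))‖ :=
        continuous_norm.comp ((Φ.apply_cont r).comp (continuous_fst.prodMk hc1))
      exact isClosed_le hc2 (continuous_const.mul (continuous_norm.comp hc1))
    have hev : ∀ᶠ i in l₁, (m i, g i) ∈ {p : B × (Fin k → F) |
        ‖Φ.P r p.1 (e.symm (p.2 j))‖ ≤ C * ‖e.symm (p.2 j)‖} := by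
      filter_upwards [hkl₀.filter_mono inf_le_left] with i hi
      exact hC (m i) _ (hi.2 j) r hr
    exact hclosed.mem_of_tendsto hpair hev
  -- linear independence of the limit tuple
  have hon : Orthonormal ℝ q := hqK
  have hli : LinearIndependent ℝ fun j : Fin k => e.symm (q j) := by
    have h1 : LinearIndependent ℝ q := hon.linearIndependent
    have := h1.map' (e.symm : F →ₗ[ℝ] E) (LinearMap.ker_eq_bot.mpr e.symm.injective)
    exact this
  -- conclude
  have hw : LinearIndependent ℝ fun j : Fin k => (⟨e.symm (q j), hmema j⟩ : Φ.stable a) := by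
    apply LinearIndependent.of_comp (Φ.stable a).subtype
    exact hli
  simpa using hw.fintype_card_le_finrank


end LinearCocycle

namespace LinearCocycle

variable {B E : Type*} [TopologicalSpace B]
  [NormedAddCommGroup E] [NormedSpace ℝ E]

lemma usc_stable (Φ : LinearCocycle B E) [CompactSpace B] [FiniteDimensional ℝ E]
    (hqh : Φ.IsQuasiHyperbolic) :
    UpperSemicontinuous (fun x : B => Module.finrank ℝ (Φ.stable x)) := by
  intro x y hy
  by_contra h
  rw [Filter.not_eventually] at h
  have hfreq : ∃ᶠ x' in nhds x, y ≤ Module.finrank ℝ (Φ.stable x') := by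
    simpa only [not_lt] using h
  have hne : (nhds x ⊓ Filter.principal {x' | y ≤ Module.finrank ℝ (Φ.stable x')}).NeBot :=
    Filter.frequently_iff_neBot.mp hfreq
  have hclus : MapClusterPt x (nhds x ⊓ Filter.principal
      {x' | y ≤ Module.finrank ℝ (Φ.stable x')}) id := by
    rw [MapClusterPt, Filter.map_id, ClusterPt, ← inf_assoc, inf_idem]
    exact hne
  have hev : ∀ᶠ x' in nhds x ⊓ Filter.principal
      {x' | y ≤ Module.finrank ℝ (Φ.stable x')}, y ≤ Module.finrank ℝ (Φ.stable (id x')) :=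
    Filter.eventually_inf_principal.mpr (Filter.Eventually.of_forall fun x' hx' => hx')
  exact absurd (Φ.le_finrank_stable_of_clusterPt hqh hclus hev) (not_le.mpr hy)

theorem final_assembly [CompactSpace B] [FiniteDimensional ℝ E]
    (Φ : LinearCocycle B E) (hqh : Φ.IsQuasiHyperbolic) :
    UpperSemicontinuous (fun x : B => Module.finrank ℝ (Φ.stable x)) ∧
    UpperSemicontinuous (fun x : B => Module.finrank ℝ (Φ.unstable x)) ∧
    (∀ x : B, ∀ a ∈ Φ.alphaLimit x ∪ Φ.omegaLimit x,
      Module.finrank ℝ (Φ.stable x) ≤ Module.finrank ℝ (Φ.stable a) ∧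
      Module.finrank ℝ (Φ.unstable x) ≤ Module.finrank ℝ (Φ.unstable a)) := by
  have hqh' := reverse_isQuasiHyperbolic hqh
  have hust : UpperSemicontinuous (fun x : B => Module.finrank ℝ (Φ.unstable x)) := by
    have h1 := Φ.reverse.usc_stable hqh'
    have heq : (fun x : B => Module.finrank ℝ (Φ.reverse.stable x)) =
        fun x : B => Module.finrank ℝ (Φ.unstable x) :=
      funext fun x => by rw [Φ.reverse_stable]
    rwa [heq] at h1
  refine ⟨Φ.usc_stable hqh, hust, ?_⟩
  intro x a ha
  -- invariance of dimensions along the flow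
  have hsinv : ∀ t : ℝ, Module.finrank ℝ (Φ.stable (Φ.flow t x)) =
      Module.finrank ℝ (Φ.stable x) := fun t => Φ.finrank_stable_flow t x
  have huinv : ∀ t : ℝ, Module.finrank ℝ (Φ.unstable (Φ.flow t x)) =
      Module.finrank ℝ (Φ.unstable x) := by
    intro t
    have := Φ.reverse.finrank_stable_flow (-t) x
    rw [Φ.reverse_flow] at this
    rw [neg_neg] at this
    rw [Φ.reverse_stable, Φ.reverse_stable] at this
    exact this
  have hclus : MapClusterPt a atBot (fun t : ℝ => Φ.flow t x) ∨
      MapClusterPt a atTop (fun t : ℝ => Φ.flow t x) := by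
    rcases ha with h | h
    · exact Or.inl h
    · exact Or.inr h
  -- stable
  constructor
  · rcases hclus with h | h
    · exact Φ.le_finrank_stable_of_clusterPt hqh h
        (Filter.Eventually.of_forall fun t => (hsinv t).ge)
    · exact Φ.le_finrank_stable_of_clusterPt hqh h
        (Filter.Eventually.of_forall fun t => (hsinv t).ge)
  · rcases hclus with h | h <;>
    · have h2 : Module.finrank ℝ (Φ.unstable x) ≤ Module.finrank ℝ (Φ.reverse.stable a) :=
        Φ.reverse.le_finrank_stable_of_clusterPt hqh' h
          (k := Module.finrank ℝ (Φ.unstable x))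
          (Filter.Eventually.of_forall fun t : ℝ => by
            rw [Φ.reverse_stable]
            exact (huinv t).ge)
      rwa [Φ.reverse_stable] at h2

end LinearCocycle

/-- For a quasi-hyperbolic continuous linear cocycle over a compact base the
functions `x ↦ dim E^s(x)` and `x ↦ dim E^u(x)` are upper semicontinuous, and
they do not decrease when passing to points of `α(x) ∪ ω(x)`. -/
theorem stable_dimension_semicontinuity
    [CompactSpace B] [FiniteDimensional ℝ E]
    (Φ : LinearCocycle B E) (hqh : Φ.IsQuasiHyperbolic) :
    UpperSemicontinuous (fun x : B => Module.finrank ℝ (Φ.stable x)) ∧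
    UpperSemicontinuous (fun x : B => Module.finrank ℝ (Φ.unstable x)) ∧
    (∀ x : B, ∀ a ∈ Φ.alphaLimit x ∪ Φ.omegaLimit x,
      Module.finrank ℝ (Φ.stable x) ≤ Module.finrank ℝ (Φ.stable a) ∧
      Module.finrank ℝ (Φ.unstable x) ≤ Module.finrank ℝ (Φ.unstable a)) := LinearCocycle.final_assembly Φ hqh
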